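/- (Theorem 4.5) Consider the greedy round-robin process for agent i with a normalized monotone submodular objective f and a cardinality constraint I = {S : |S| ≤ k}, and let S be agent i's final set. Let T = {t_1, …, t_{k'}} with k' ≤ k be a set of items, indexed in the order in which they are removed from the pool of available items, such that no element of T is removed before agent i's first pick and at most one element of T is removed between any two consecutive turns of agent i. Then f(S) ≥ f(T) / 2. -/

import Mathlib

open Finset

/-- A set function on subsets of a finite ground set is submodular if the marginal value of any
item with respect to a smaller set is at least its marginal value with respect to a larger set. -/
def Submodular {α : Type*} [DecidableEq α] (f : Finset α → ℝ) : Prop :=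
  ∀ ⦃S T : Finset α⦄, S ⊆ T → ∀ ⦃x : α⦄, x ∉ T →
    f (insert x T) - f T ≤ f (insert x S) - f S

/-- The agent's solution just before their `r`-th pick: the set of the first `r` picked items. -/
def solAt {α : Type*} [DecidableEq α] (pick : ℕ → α) (r : ℕ) : Finset α :=
  (Finset.range r).image pick

/-- Theorem 4.5: consider the greedy round-robin process of agent `i` with a normalized monotone
submodular objective `f` and a cardinality constraint `|S| ≤ k` (at each turn, if the solution is
not full and items remain, the agent adds an available item of maximum marginal value; other
agents may remove further items between turns; the process ends when the solution is full or no
items remain), with final solution `S = solAt pick s`. Let `T = {t 0, …, t (k'−1)}`, `k' ≤ k`, be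
a set of distinct items indexed in removal order such that no element of `T` is removed before
agent `i`'s first pick and at most one element of `T` is removed between any two consecutive turns
of agent `i` (hence `t j` is still available at each of the agent's turns `r ≤ min j s`). Then
`f(S) ≥ f(T) / 2`. -/
theorem stmt_9 {α : Type*} [DecidableEq α] [Fintype α]
    (f : Finset α → ℝ) (k : ℕ)
    (hnorm : f ∅ = 0)
    (hmono : ∀ ⦃S T : Finset α⦄, S ⊆ T → f S ≤ f T)
    (hsub : Submodular f)
    (s : ℕ) (pick : ℕ → α) (avail : ℕ → Finset α)
    (hmem : ∀ r < s, pick r ∈ avail r)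
    (hcard : ∀ r < s, (solAt pick r).card < k)
    (hgreedy : ∀ r < s, ∀ x ∈ avail r,
      f (insert x (solAt pick r)) - f (solAt pick r) ≤
        f (insert (pick r) (solAt pick r)) - f (solAt pick r))
    (hrem : ∀ r < s, avail (r + 1) ⊆ (avail r).erase (pick r))
    (hstop : (solAt pick s).card = k ∨ avail s = ∅)
    (k' : ℕ) (hk' : k' ≤ k) (t : ℕ → α) (htinj : Set.InjOn t (Set.Iio k'))
    (htavail : ∀ j < k', ∀ r : ℕ, r ≤ j → r ≤ s → t j ∈ avail r) :
    f ((Finset.range k').image t) / 2 ≤ f (solAt pick s) := by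
  set S := solAt pick s with hS
  -- k' ≤ s
  have hk's : k' ≤ s := by
    by_contra h
    push_neg at h
    have hts : t s ∈ avail s := htavail s h s le_rfl le_rfl
    have hav : avail s ≠ ∅ := fun he => by simp [he] at hts
    have hcardS : S.card = k := hstop.resolve_right hav
    have : S.card ≤ s := by
      simpa [hS, solAt] using (Finset.card_image_le : (((Finset.range s).image pick)).card ≤ _)
    omega
  have hsucc : ∀ r, solAt pick (r + 1) = insert (pick r) (solAt pick r) := by
    intro r; simp [solAt, Finset.range_add_one]
  have hsub' : ∀ r, r ≤ s → solAt pick r ⊆ S := by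
    intro r hr
    exact Finset.image_subset_image (Finset.range_subset_range.2 hr)
  have hmono0 : ∀ A : Finset α, 0 ≤ f A := by
    intro A
    have := hmono (Finset.empty_subset A)
    linarith
  -- marginal bound for each j < k'
  have hmarg : ∀ j < k', f (insert (t j) S) - f S ≤
      f (solAt pick (j + 1)) - f (solAt pick j) := by
    intro j hj
    have hjs : j < s := lt_of_lt_of_le hj hk's
    have h1 : f (insert (t j) (solAt pick j)) - f (solAt pick j) ≤
        f (solAt pick (j + 1)) - f (solAt pick j) := by
      have := hgreedy j hjs (t j) (htavail j hj j le_rfl hjs.le)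
      rw [hsucc j]; exact this
    by_cases htS : t j ∈ S
    · rw [Finset.insert_eq_self.2 htS]
      have : f (solAt pick j) ≤ f (solAt pick (j + 1)) := by
        rw [hsucc j]; exact hmono (Finset.subset_insert _ _)
      linarith
    · have := hsub (hsub' j hjs.le) htS
      linarith
  -- f (S ∪ T_m) ≤ f S + ∑ marginals
  have hUnion : ∀ m, m ≤ k' → f (S ∪ (Finset.range m).image t) ≤
      f S + ∑ j ∈ Finset.range m, (f (insert (t j) S) - f S) := by
    intro m hm
    induction m with
    | zero => simp
    | succ n ih =>
      have hn : n ≤ k' := Nat.le_of_succ_le hm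
      have heq : S ∪ (Finset.range (n + 1)).image t =
          insert (t n) (S ∪ (Finset.range n).image t) := by
        rw [Finset.range_add_one, Finset.image_insert]
        ext x; simp [or_comm, or_assoc, or_left_comm]
      rw [heq, Finset.sum_range_succ]
      have hins : 0 ≤ f (insert (t n) S) - f S := by
        have := hmono (Finset.subset_insert (t n) S); linarith
      by_cases hx : t n ∈ S ∪ (Finset.range n).image t
      · rw [Finset.insert_eq_self.2 hx]
        linarith [ih hn]
      · have := hsub (Finset.subset_union_left (s₁ := S) (s₂ := (Finset.range n).image t)) hx
        linarith [ih hn]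
  -- telescoping sum
  have htel : ∑ j ∈ Finset.range k', (f (solAt pick (j + 1)) - f (solAt pick j)) =
      f (solAt pick k') - f (solAt pick 0) := Finset.sum_range_sub (fun j => f (solAt pick j)) k'
  have hzero : solAt pick 0 = ∅ := by simp [solAt]
  have hsum : ∑ j ∈ Finset.range k', (f (insert (t j) S) - f S) ≤ f S := by
    calc ∑ j ∈ Finset.range k', (f (insert (t j) S) - f S)
        ≤ ∑ j ∈ Finset.range k', (f (solAt pick (j + 1)) - f (solAt pick j)) :=
          Finset.sum_le_sum fun j hj => hmarg j (Finset.mem_range.1 hj)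
      _ = f (solAt pick k') - f (solAt pick 0) := htel
      _ ≤ f S := by
          rw [hzero, hnorm]
          simpa using hmono (hsub' k' hk's)
  have hT : f ((Finset.range k').image t) ≤ f (S ∪ (Finset.range k').image t) :=
    hmono Finset.subset_union_right
  have := hUnion k' le_rfl
  linarith
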